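/- Let C(τ) = [[C₁₁, τC₁₂],[τC₂₁, C₂₂]] where C = [[C₁₁,C₁₂],[C₂₁,C₂₂]] is symmetric positive definite. Then for every nonempty J ⊆ [n] and τ ∈ [0,1], the map τ ↦ det(C(τ)_J) is nonincreasing; equivalently −(∂/∂τ) det(C(τ)_J) ≥ 0. -/

import Mathlib

open Matrix

set_option linter.unusedSectionVars false

variable {k : Type*} [Fintype k] [DecidableEq k]

lemma aux_psd_det_nonneg {X : Matrix k k ℝ} (hX : X.PosSemidef) : 0 ≤ X.det := by
  rw [hX.1.det_eq_prod_eigenvalues]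
  exact Finset.prod_nonneg fun i _ => by simpa using hX.eigenvalues_nonneg i

lemma aux_psd_posDef_of_det_ne_zero {X : Matrix k k ℝ} (hX : X.PosSemidef)
    (h : X.det ≠ 0) : X.PosDef := by
  exact hX.posDef_iff_isUnit.mpr ((isUnit_iff_isUnit_det _).2 h.isUnit)

lemma aux_one_le_det_one_add {Q : Matrix k k ℝ} (hQ : Q.PosSemidef) :
    (1 : ℝ) ≤ (1 + Q).det := by
  have hQ1 := hQ.1
  set U : Matrix k k ℝ := (hQ1.eigenvectorUnitary : Matrix k k ℝ) with hUdef
  have hU : U * star U = 1 := (Matrix.mem_unitaryGroup_iff).mp hQ1.eigenvectorUnitary.2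
  have hkey : (1 : Matrix k k ℝ) + Q
      = U * (1 + diagonal (RCLike.ofReal ∘ hQ1.eigenvalues)) * (star U) := by
    rw [mul_add, add_mul, mul_one, hU]
    conv_lhs => rw [hQ1.spectral_theorem, Unitary.conjStarAlgAut_apply]
  have hUdet : U.det * (star U).det = 1 := by rw [← det_mul, hU, det_one]
  have hD : (1 + diagonal ((RCLike.ofReal ∘ hQ1.eigenvalues) : k → ℝ) : Matrix k k ℝ).det
      = ∏ i, (1 + hQ1.eigenvalues i) := by
    rw [← diagonal_one, diagonal_add, det_diagonal]
    simp
  have h1 : (1 : ℝ) ≤ ∏ i, (1 + hQ1.eigenvalues i) := by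
    calc (1:ℝ) = ∏ _i : k, (1:ℝ) := by simp
      _ ≤ ∏ i, (1 + hQ1.eigenvalues i) :=
        Finset.prod_le_prod (fun i _ => zero_le_one)
          (fun i _ => by linarith [hQ.eigenvalues_nonneg i])
  calc (1 : ℝ) = U.det * (star U).det := hUdet.symm
    _ ≤ U.det * (1 + diagonal ((RCLike.ofReal ∘ hQ1.eigenvalues) : k → ℝ) : Matrix k k ℝ).det
          * (star U).det := by
        nlinarith [hUdet, h1, hD]
    _ = (1 + Q).det := by rw [hkey, det_mul, det_mul]

open scoped MatrixOrder in
lemma aux_det_le_det_add {X P : Matrix k k ℝ} (hX : X.PosSemidef) (hP : P.PosSemidef) :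
    X.det ≤ (X + P).det := by
  by_cases hdet : X.det = 0
  · rw [hdet]
    exact aux_psd_det_nonneg (hX.add hP)
  · have hXpd : X.PosDef := aux_psd_posDef_of_det_ne_zero hX hdet
    set R := CFC.sqrt X with hR
    have hRpsd : R.PosSemidef := nonneg_iff_posSemidef.mp (CFC.sqrt_nonneg X)
    have hRR : R * R = X := CFC.sqrt_mul_sqrt_self X hX.nonneg
    have hRdet : IsUnit R.det := by
      have h2 : R.det * R.det = X.det := by rw [← det_mul, hRR]
      have hRne : R.det ≠ 0 := fun hc => hdet (by rw [← h2, hc, mul_zero])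
      exact hRne.isUnit
    have hRmul : R * R⁻¹ = 1 := mul_nonsing_inv R hRdet
    have hRmul' : R⁻¹ * R = 1 := nonsing_inv_mul R hRdet
    set Q := R⁻¹ * P * R⁻¹ with hQdef
    have hQ : Q.PosSemidef := by
      have h3 := hP.conjTranspose_mul_mul_same (B := R⁻¹)
      rwa [hRpsd.1.inv.eq] at h3
    have key : X + P = R * (1 + Q) * R := by
      have : R * Q * R = P := by
        rw [hQdef]
        calc R * (R⁻¹ * P * R⁻¹) * R = (R * R⁻¹) * P * (R⁻¹ * R) := by
              simp only [Matrix.mul_assoc]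
          _ = P := by rw [hRmul, hRmul', Matrix.one_mul, Matrix.mul_one]
      rw [mul_add, add_mul, mul_one, hRR, this]
    have h1Q := aux_one_le_det_one_add hQ
    have hdXpos : 0 < X.det := hXpd.det_pos
    calc X.det = X.det * 1 := (mul_one _).symm
      _ ≤ X.det * (1 + Q).det := by nlinarith
      _ = (X + P).det := by
          have h4 : R.det * R.det = X.det := by rw [← det_mul, hRR]
          rw [key, det_mul, det_mul, ← h4]; ring
lemma aux_psd_smul {k : Type*} [Fintype k] {P : Matrix k k ℝ} (hP : P.PosSemidef) {c : ℝ} (hc : 0 ≤ c) :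
    (c • P).PosSemidef := by
  exact hP.smul hc

lemma aux_posDef_submatrix {l k : Type*} [Fintype l] [DecidableEq l] [Fintype k] [DecidableEq k]
    {M : Matrix k k ℝ} (hM : M.PosDef) {f : l → k} (hf : Function.Injective f) :
    (M.submatrix f f).PosDef := by
  exact hM.submatrix hf

lemma aux_det_blocks_mono {m' n' : Type*} [Fintype m'] [DecidableEq m'] [Fintype n'] [DecidableEq n']
    (A₁₁ : Matrix m' m' ℝ) (A₁₂ : Matrix m' n' ℝ) (A₂₂ : Matrix n' n' ℝ)
    (hPD : (fromBlocks A₁₁ A₁₂ A₁₂ᵀ A₂₂).PosDef)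
    {s t : ℝ} (hs : 0 ≤ s) (hst : s ≤ t) (ht : t ≤ 1) :
    (fromBlocks A₁₁ (t • A₁₂) (t • A₁₂ᵀ) A₂₂).det
      ≤ (fromBlocks A₁₁ (s • A₁₂) (s • A₁₂ᵀ) A₂₂).det := by
  have hA11 : A₁₁.PosDef := by
    have h0 : A₁₁ = (fromBlocks A₁₁ A₁₂ A₁₂ᵀ A₂₂).submatrix Sum.inl Sum.inl := by
      ext i j; rfl
    rw [h0]
    exact aux_posDef_submatrix hPD Sum.inl_injective
  haveI : Invertible A₁₁ := hA11.isUnit.invertible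
  have hCT : A₁₂ᴴ = A₁₂ᵀ := conjTranspose_eq_transpose_of_trivial _
  set S := A₁₂ᵀ * A₁₁⁻¹ * A₁₂ with hS
  have hSpsd : S.PosSemidef := by
    have h1 := (hA11.inv.posSemidef).conjTranspose_mul_mul_same (B := A₁₂)
    rwa [hCT] at h1
  have hSchur : (A₂₂ - S).PosSemidef := by
    have h2 := hPD.posSemidef
    rw [← hCT] at h2
    have h3 := (PosDef.fromBlocks₁₁ A₁₂ A₂₂ hA11).mp h2
    rwa [hCT] at h3
  have hdet : ∀ τ : ℝ, (fromBlocks A₁₁ (τ • A₁₂) (τ • A₁₂ᵀ) A₂₂).det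
      = A₁₁.det * (A₂₂ - (τ ^ 2) • S).det := by
    intro τ
    rw [det_fromBlocks₁₁]
    have hmm : (τ • A₁₂ᵀ) * ⅟A₁₁ * (τ • A₁₂) = (τ ^ 2) • S := by
      rw [invOf_eq_nonsing_inv, hS, Matrix.smul_mul, Matrix.smul_mul, Matrix.mul_smul,
        smul_smul, sq]
    rw [hmm]
  rw [hdet s, hdet t]
  have h1 : (A₂₂ - (t ^ 2) • S).PosSemidef := by
    have he : A₂₂ - (t ^ 2) • S = (A₂₂ - S) + (1 - t ^ 2) • S := by
      rw [sub_smul, one_smul]; abel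
    rw [he]
    exact hSchur.add (aux_psd_smul hSpsd (by nlinarith))
  have h2 : A₂₂ - (s ^ 2) • S = (A₂₂ - (t ^ 2) • S) + (t ^ 2 - s ^ 2) • S := by
    rw [sub_smul]; abel
  have h3 := aux_det_le_det_add h1 (aux_psd_smul hSpsd (by nlinarith : (0:ℝ) ≤ t ^ 2 - s ^ 2))
  rw [← h2] at h3
  exact mul_le_mul_of_nonneg_left h3 hA11.det_pos.le

/-- For `C = [[C₁₁, C₁₂],[C₂₁, C₂₂]]` symmetric positive definite and
`C(τ) = [[C₁₁, τC₁₂],[τC₂₁, C₂₂]]`, the map `τ ↦ det(C(τ)_J)` is nonincreasing on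
`[0,1]` for every nonempty index set `J`. -/
theorem stmt_10 {n₁ n₂ : ℕ}
    (C₁₁ : Matrix (Fin n₁) (Fin n₁) ℝ) (C₁₂ : Matrix (Fin n₁) (Fin n₂) ℝ)
    (C₂₁ : Matrix (Fin n₂) (Fin n₁) ℝ) (C₂₂ : Matrix (Fin n₂) (Fin n₂) ℝ)
    (hC : (Matrix.fromBlocks C₁₁ C₁₂ C₂₁ C₂₂).PosDef)
    (hsymm : (Matrix.fromBlocks C₁₁ C₁₂ C₂₁ C₂₂).IsSymm)
    (J : Finset (Fin n₁ ⊕ Fin n₂)) (hJ : J.Nonempty) :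
    AntitoneOn (fun τ : ℝ =>
        ((Matrix.fromBlocks C₁₁ (τ • C₁₂) (τ • C₂₁) C₂₂).submatrix
          (Subtype.val : J → Fin n₁ ⊕ Fin n₂) (Subtype.val : J → Fin n₁ ⊕ Fin n₂)).det)
      (Set.Icc (0 : ℝ) 1) := by
  classical
  have hC21 : C₂₁ = C₁₂ᵀ := by
    ext i j
    have h := congrFun (congrFun hsymm (Sum.inr i)) (Sum.inl j)
    simpa using h.symm
  subst hC21
  intro s hs t ht hst
  dsimp only
  let v₁ : J.toLeft → Fin n₁ := Subtype.val
  let v₂ : J.toRight → Fin n₂ := Subtype.val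
  let e : (↥J.toLeft ⊕ ↥J.toRight) ≃ ↥J :=
    { toFun := Sum.elim (fun a => ⟨Sum.inl a.1, Finset.mem_toLeft.mp a.2⟩)
        (fun b => ⟨Sum.inr b.1, Finset.mem_toRight.mp b.2⟩)
      invFun := fun x => match x with
        | ⟨Sum.inl a, h⟩ => Sum.inl ⟨a, Finset.mem_toLeft.mpr h⟩
        | ⟨Sum.inr b, h⟩ => Sum.inr ⟨b, Finset.mem_toRight.mpr h⟩
      left_inv := by rintro (⟨a, ha⟩ | ⟨b, hb⟩) <;> rfl
      right_inv := by rintro ⟨(a | b), h⟩ <;> rfl }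
  set B11 := C₁₁.submatrix v₁ v₁ with hB11
  set B12 := C₁₂.submatrix v₁ v₂ with hB12
  set B22 := C₂₂.submatrix v₂ v₂ with hB22
  have key : ∀ τ : ℝ,
      ((fromBlocks C₁₁ (τ • C₁₂) (τ • C₁₂ᵀ) C₂₂).submatrix
          (Subtype.val : J → Fin n₁ ⊕ Fin n₂) Subtype.val).det
        = (fromBlocks B11 (τ • B12) (τ • B12ᵀ) B22).det := by
    intro τ
    have h := det_submatrix_equiv_self e
      ((fromBlocks C₁₁ (τ • C₁₂) (τ • C₁₂ᵀ) C₂₂).submatrix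
        (Subtype.val : J → Fin n₁ ⊕ Fin n₂) Subtype.val)
    rw [← h]
    congr 1
    ext (a | b) (c | d) <;> rfl
  have hPDB : (fromBlocks B11 B12 B12ᵀ B22).PosDef := by
    have hfeq : fromBlocks B11 B12 B12ᵀ B22
        = (fromBlocks C₁₁ C₁₂ C₁₂ᵀ C₂₂).submatrix
            (fun x => (e x : Fin n₁ ⊕ Fin n₂)) (fun x => (e x : Fin n₁ ⊕ Fin n₂)) := by
      ext (a | b) (c | d) <;> rfl
    rw [hfeq]
    exact aux_posDef_submatrix hC (Subtype.coe_injective.comp e.injective)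
  rw [key s, key t]
  exact aux_det_blocks_mono B11 B12 B22 hPDB hs.1 hst ht.2
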